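/- In the setting of the previous statement, assume additionally that the τᵢ have a continuous distribution (no ties a.s.) and that k = k(M,ε,δ) ≥ 0. Then P[L(τ̃) ≤ ε] ≤ 1 − F_{Bin(M,ε)}(k−1). -/

import Mathlib

open MeasureTheory ProbabilityTheory Filter

/-- The `j`-th smallest value (1-indexed) among `v 0, …, v (M-1)`. -/
noncomputable def orderStat {M : ℕ} (v : Fin M → ℝ) (j : ℕ) : ℝ :=
  (List.insertionSort (· ≤ ·) (List.ofFn v)).getD (j - 1) 0

/-- Binomial CDF on integer arguments, with the convention `F(k) = 0` for `k < 0`. -/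
noncomputable def binCDFZ (m : ℕ) (p : ℝ) (k : ℤ) : ℝ :=
  if k < 0 then 0
  else ∑ i ∈ Finset.range (k.toNat + 1), (m.choose i : ℝ) * p ^ i * (1 - p) ^ (m - i)

section AuxAlg


noncomputable def bterm (ε : ℝ) (n i : ℕ) : ℝ := (n.choose i : ℝ) * ε ^ i * (1 - ε) ^ (n - i)
noncomputable def bG (ε : ℝ) (n k : ℕ) : ℝ := ∑ i ∈ Finset.range k, bterm ε n i

lemma bterm_nonneg {ε : ℝ} (h0 : 0 ≤ ε) (h1 : ε ≤ 1) (n i : ℕ) : 0 ≤ bterm ε n i := by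
  unfold bterm
  have : (0:ℝ) ≤ 1 - ε := by linarith
  positivity

lemma bterm_pascal (ε : ℝ) (n k : ℕ) :
    ε * bterm ε n k + (1 - ε) * bterm ε n (k + 1) = bterm ε (n + 1) (k + 1) := by
  rcases lt_trichotomy k n with h | h | h
  · have h1 : n - k = (n - (k+1)) + 1 := by omega
    have h2 : n + 1 - (k + 1) = n - k := by omega
    rw [bterm, bterm, bterm, h2, Nat.choose_succ_succ, h1]
    push_cast
    ring
  · subst h
    have h1 : k - k = 0 := by omega
    have h2 : Nat.choose k (k+1) = 0 := Nat.choose_eq_zero_of_lt (by omega)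
    rw [bterm, bterm, bterm, h2, Nat.choose_self, Nat.choose_self]
    simp [h1]
    ring
  · have h1 : Nat.choose n k = 0 := Nat.choose_eq_zero_of_lt h
    have h2 : Nat.choose n (k+1) = 0 := Nat.choose_eq_zero_of_lt (by omega)
    have h3 : Nat.choose (n+1) (k+1) = 0 := Nat.choose_eq_zero_of_lt (by omega)
    rw [bterm, bterm, bterm, h1, h2, h3]
    push_cast
    ring

lemma bG_succ (ε : ℝ) (n k : ℕ) : bG ε n (k+1) = bG ε n k + bterm ε n k :=
  Finset.sum_range_succ _ _

lemma bG_pascal (ε : ℝ) (n k : ℕ) :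
    ε * bG ε n k + (1 - ε) * bG ε n (k + 1) = bG ε (n + 1) (k + 1) := by
  induction k with
  | zero =>
    simp [bG, bterm, Finset.sum_range_succ]
    ring
  | succ k ih =>
    rw [bG_succ ε (n+1) (k+1), bG_succ ε n (k+1), bG_succ ε n k, ← bterm_pascal ε n k]
    rw [bG_succ ε n k] at ih
    linear_combination ih

lemma bG_mono {ε : ℝ} (h0 : 0 ≤ ε) (h1 : ε ≤ 1) (n k : ℕ) : bG ε n k ≤ bG ε n (k+1) := by
  rw [bG_succ]
  nlinarith [bterm_nonneg h0 h1 n k]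

lemma bG_zero (ε : ℝ) (n : ℕ) : bG ε n 0 = 0 := by simp [bG]

lemma bG_zero_card (ε : ℝ) (k : ℕ) (hk : 1 ≤ k) : bG ε 0 k = 1 := by
  rw [bG, Finset.sum_eq_single 0]
  · simp [bterm]
  · intro i _ hi
    simp [bterm, Nat.choose_eq_zero_of_lt (by omega : (0:ℕ) < i)]
  · intro h
    simp at h
    omega


section Pat
variable {ι : Type*} [DecidableEq ι]

noncomputable def patSum (q : ι → ℝ) (s : Finset ι) (k : ℕ) : ℝ :=
  ∑ T ∈ s.powerset, if k ≤ T.card then (∏ i ∈ T, q i) * ∏ i ∈ s \ T, (1 - q i) else 0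

lemma patSum_zero (q : ι → ℝ) (s : Finset ι) : patSum q s 0 = 1 := by
  have h := Finset.prod_add q (fun i => 1 - q i) s
  simp only [patSum, Nat.zero_le, if_true]
  rw [← h]
  simp

lemma patSum_insert (q : ι → ℝ) {s : Finset ι} {a : ι} (ha : a ∉ s) (k : ℕ) :
    patSum q (insert a s) k = (1 - q a) * patSum q s k + q a * patSum q s (k - 1) := by
  rw [patSum, Finset.sum_powerset_insert ha]
  congr 1
  · rw [patSum, Finset.mul_sum]
    refine Finset.sum_congr rfl fun T hT => ?_
    rw [Finset.mem_powerset] at hT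
    have haT : a ∉ T := fun h => ha (hT h)
    have hsd : insert a s \ T = insert a (s \ T) := by
      ext x
      simp only [Finset.mem_sdiff, Finset.mem_insert]
      constructor
      · rintro ⟨h1 | h1, h2⟩
        · exact Or.inl h1
        · exact Or.inr ⟨h1, h2⟩
      · rintro (rfl | ⟨h1, h2⟩)
        · exact ⟨Or.inl rfl, haT⟩
        · exact ⟨Or.inr h1, h2⟩
    rw [hsd, Finset.prod_insert (fun h => ha (Finset.mem_sdiff.1 h).1)]
    split
    · ring
    · ring
  · rw [patSum, Finset.mul_sum]
    refine Finset.sum_congr rfl fun T hT => ?_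
    rw [Finset.mem_powerset] at hT
    have haT : a ∉ T := fun h => ha (hT h)
    have hcard : (insert a T).card = T.card + 1 := Finset.card_insert_of_notMem haT
    have hsd : insert a s \ insert a T = s \ T := by
      ext x
      simp only [Finset.mem_sdiff, Finset.mem_insert, not_or]
      constructor
      · rintro ⟨h1 | h1, h2, h3⟩
        · exact absurd h1 h2
        · exact ⟨h1, h3⟩
      · rintro ⟨h1, h2⟩
        exact ⟨Or.inr h1, fun h => ha (h ▸ h1), h2⟩
    rw [hsd, hcard, Finset.prod_insert haT]
    by_cases hc : k - 1 ≤ T.card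
    · rw [if_pos (by omega : k ≤ T.card + 1), if_pos hc]; ring
    · rw [if_neg (by omega), if_neg hc]; ring


lemma patSum_anti (q : ι → ℝ) (s : Finset ι) (hq : ∀ i ∈ s, 0 ≤ q i ∧ q i ≤ 1)
    {j k : ℕ} (hjk : j ≤ k) : patSum q s k ≤ patSum q s j := by
  refine Finset.sum_le_sum fun T hT => ?_
  rw [Finset.mem_powerset] at hT
  have hnn : 0 ≤ (∏ i ∈ T, q i) * ∏ i ∈ s \ T, (1 - q i) := by
    apply mul_nonneg
    · exact Finset.prod_nonneg fun i hi => (hq i (hT hi)).1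
    · exact Finset.prod_nonneg fun i hi => by
        have := (hq i (Finset.mem_sdiff.1 hi).1).2; linarith
  by_cases hk : k ≤ T.card
  · rw [if_pos hk, if_pos (le_trans hjk hk)]
  · rw [if_neg hk]
    split
    · exact hnn
    · exact le_refl 0

lemma patSum_le {ε : ℝ} (h0 : 0 ≤ ε) (h1 : ε ≤ 1) (q : ι → ℝ) (s : Finset ι)
    (hq : ∀ i ∈ s, 0 ≤ q i ∧ q i ≤ ε) : ∀ k, patSum q s k ≤ 1 - bG ε s.card k := by
  classical
  induction s using Finset.induction_on with
  | empty =>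
    intro k
    rcases Nat.eq_zero_or_pos k with rfl | hk
    · rw [patSum_zero, Finset.card_empty, bG_zero]; norm_num
    · have : patSum q ∅ k = 0 := by
        simp [patSum, Finset.powerset_empty, Nat.not_succ_le_zero]
        omega
      rw [this, Finset.card_empty, bG_zero_card ε k hk]
      norm_num
  | @insert a s ha ih =>
    intro k
    have hq' : ∀ i ∈ s, 0 ≤ q i ∧ q i ≤ ε := fun i hi => hq i (Finset.mem_insert_of_mem hi)
    have hq1 : ∀ i ∈ s, 0 ≤ q i ∧ q i ≤ 1 := fun i hi => ⟨(hq' i hi).1, le_trans (hq' i hi).2 h1⟩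
    have hqa := hq a (Finset.mem_insert_self a s)
    rcases Nat.eq_zero_or_pos k with rfl | hk
    · rw [patSum_zero, Finset.card_insert_of_notMem ha, bG_zero]; norm_num
    · rw [patSum_insert q ha, Finset.card_insert_of_notMem ha]
      have e1 : k = (k - 1) + 1 := by omega
      have hpas : ε * bG ε s.card (k-1) + (1 - ε) * bG ε s.card k = bG ε (s.card + 1) k := by
        conv_lhs => rw [e1]
        conv_rhs => rw [e1]
        exact bG_pascal ε s.card (k-1)
      have hik := ih hq' k
      have hik1 := ih hq' (k - 1)
      have hanti := patSum_anti q s hq1 (Nat.sub_le k 1)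
      have hbg : bG ε s.card (k-1) ≤ bG ε s.card k := by
        conv_rhs => rw [e1]
        rw [bG_succ]
        nlinarith [bterm_nonneg h0 h1 s.card (k-1)]
      nlinarith [hqa.1, hqa.2, hik, hik1, hanti, hbg, hpas]

end Pat

lemma orderStat_count {M : ℕ} (v : Fin M → ℝ) (k : ℕ) (hk : k + 1 ≤ M) (r : ℝ)
    (h : r ≤ orderStat v (M - k)) :
    k + 1 ≤ (Finset.univ.filter fun i => r ≤ v i).card := by
  classical
  set l := List.insertionSort (· ≤ ·) (List.ofFn v) with hl
  have hlen : l.length = M := by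
    rw [hl, List.length_insertionSort, List.length_ofFn]
  have hsort : List.Pairwise (· ≤ ·) l := List.pairwise_insertionSort _ _
  have hj : M - k - 1 < l.length := by omega
  have hgd : orderStat v (M - k) = l[M - k - 1] := by
    rw [orderStat, ← hl, List.getD_eq_getElem l 0 hj]
  set p : ℝ → Bool := fun x => decide (r ≤ x) with hp
  -- all elements of the last k+1 positions satisfy p
  have hdrop : ∀ x ∈ l.drop (M - k - 1), p x = true := by
    intro x hx
    obtain ⟨i, hi, hget⟩ := List.mem_iff_getElem.1 hx
    have hii : M - k - 1 + i < l.length := by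
      rw [List.length_drop] at hi; omega
    rw [List.getElem_drop] at hget
    have hmono : l[M - k - 1]'hj ≤ l[M - k - 1 + i]'hii := by
      apply List.Pairwise.rel_get_of_le hsort
      simp
    simp only [hp, decide_eq_true_eq]
    rw [← hget]
    calc r ≤ l[M - k - 1]'hj := by rw [← hgd]; exact h
    _ ≤ l[M - k - 1 + i]'hii := hmono
  have hcount : k + 1 ≤ l.countP p := by
    conv_rhs => rw [← List.take_append_drop (M - k - 1) l]
    rw [List.countP_append]
    have h1 : (l.drop (M - k - 1)).countP p = (l.drop (M - k - 1)).length :=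
      List.countP_eq_length.2 hdrop
    rw [h1, List.length_drop, hlen]
    omega
  have hperm : l.countP p = (List.ofFn v).countP p :=
    (List.perm_insertionSort _ _).countP_eq p
  have hofn : (List.ofFn v).countP p = (Finset.univ.filter fun i => r ≤ v i).card := by
    rw [List.ofFn_eq_map, List.countP_map]
    show (List.finRange M).countP (fun i => decide (r ≤ v i)) = _
    rw [Fin.univ_def, Finset.card, Finset.filter]
    simp [Multiset.countP_eq_card_filter]
    exact List.countP_eq_length_filter
  omega


end AuxAlg

/-- Upper PAC bound: with `τ₁,…,τ_M` i.i.d. with continuous distribution (no ties a.s.),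
`L(t) = P[τᵢ > t]`, `τ̃ = τ_{(M−k)}` and `k = k(M,ε,δ) ≥ 0`:
`P[L(τ̃) ≤ ε] ≤ 1 − F_{Bin(M,ε)}(k−1)`. -/
theorem stmt_15 {Ω : Type*} [MeasurableSpace Ω] (μ : Measure Ω) [IsProbabilityMeasure μ]
    (M : ℕ) (hM : 1 ≤ M) (τ : Fin M → Ω → ℝ)
    (hmeas : ∀ i, Measurable (τ i))
    (hindep : iIndepFun τ μ)
    (hident : ∀ i j, IdentDistrib (τ i) (τ j) μ μ)
    (hcont : ∀ i (r : ℝ), μ {ω | τ i ω = r} = 0)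
    (L : ℝ → ℝ) (hL : ∀ (i : Fin M) (t : ℝ), (μ {ω | t < τ i ω}).toReal = L t)
    (ε δ : ℝ) (hε0 : 0 < ε) (hε1 : ε < 1) (hδ0 : 0 < δ) (hδ1 : δ < 1)
    (k : ℕ) (hkM : k ≤ M - 1)
    (hkle : binCDFZ M ε k ≤ δ)
    (hkmax : ∀ j : ℤ, (k : ℤ) < j → j ≤ (M : ℤ) - 1 → δ < binCDFZ M ε j) :
    μ {ω | L (orderStat (fun i => τ i ω) (M - k)) ≤ ε}
      ≤ ENNReal.ofReal (1 - binCDFZ M ε ((k : ℤ) - 1)) := by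
  classical
  rcases Nat.eq_zero_or_pos k with rfl | hk1
  · have h0 : binCDFZ M ε ((0:ℕ) - 1 : ℤ) = 0 := by
      rw [binCDFZ, if_pos (by norm_num)]
    rw [h0]
    norm_num
    exact prob_le_one
  have hkM' : k + 1 ≤ M := by omega
  set i0 : Fin M := ⟨0, hM⟩ with hi0
  set S : Set ℝ := {t : ℝ | L t ≤ ε} with hS
  have hmeaslt : ∀ (i : Fin M) (c : ℝ), MeasurableSet {ω | c < τ i ω} := by
    intro i c
    exact (hmeas i) measurableSet_Ioi
  have hμofReal : ∀ (i : Fin M) (c : ℝ), μ {ω | c < τ i ω} = ENNReal.ofReal (L c) := by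
    intro i c
    rw [← hL i c, ENNReal.ofReal_toReal (measure_ne_top μ _)]
  -- S is nonempty
  have hSne : S.Nonempty := by
    have hanti : Antitone (fun n : ℕ => {ω | (n:ℝ) < τ i0 ω}) := by
      intro n m hnm ω hω
      simp only [Set.mem_setOf_eq] at hω ⊢
      have : (n:ℝ) ≤ m := Nat.cast_le.2 hnm
      linarith
    have h1 := tendsto_measure_iInter_atTop (μ := μ) (s := fun n : ℕ => {ω | (n:ℝ) < τ i0 ω})
      (fun n => (hmeaslt i0 n).nullMeasurableSet) hanti ⟨0, measure_ne_top μ _⟩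
    have h2 : (⋂ n : ℕ, {ω | (n:ℝ) < τ i0 ω}) = ∅ := by
      ext ω
      simp only [Set.mem_iInter, Set.mem_setOf_eq, Set.mem_empty_iff_false, iff_false, not_forall,
        not_lt]
      obtain ⟨n, hn⟩ := exists_nat_gt (τ i0 ω)
      exact ⟨n, hn.le⟩
    rw [h2, measure_empty] at h1
    have h3 : ∀ᶠ n : ℕ in atTop, (μ ∘ fun n : ℕ => {ω | (n:ℝ) < τ i0 ω}) n < ENNReal.ofReal ε :=
      h1.eventually_lt_const (by simp [ENNReal.ofReal_pos, hε0])
    obtain ⟨n, hn⟩ := h3.exists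
    refine ⟨(n : ℝ), ?_⟩
    rw [hS, Set.mem_setOf_eq, ← hL i0 n]
    exact ENNReal.toReal_le_of_le_ofReal hε0.le hn.le
  -- S is bounded below
  have hSbdd : BddBelow S := by
    have hmono : Monotone (fun n : ℕ => {ω | (-(n:ℝ)) < τ i0 ω}) := by
      intro n m hnm ω hω
      simp only [Set.mem_setOf_eq] at hω ⊢
      have : (n:ℝ) ≤ m := Nat.cast_le.2 hnm
      linarith
    have h1 := tendsto_measure_iUnion_atTop (μ := μ) (s := fun n : ℕ => {ω | (-(n:ℝ)) < τ i0 ω}) hmono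
    have h2 : (⋃ n : ℕ, {ω | (-(n:ℝ)) < τ i0 ω}) = Set.univ := by
      ext ω
      simp only [Set.mem_iUnion, Set.mem_setOf_eq, Set.mem_univ, iff_true]
      obtain ⟨n, hn⟩ := exists_nat_gt (-(τ i0 ω))
      exact ⟨n, by linarith⟩
    rw [h2, measure_univ] at h1
    have h3 : ∀ᶠ n : ℕ in atTop,
        ENNReal.ofReal ε < (μ ∘ fun n : ℕ => {ω | (-(n:ℝ)) < τ i0 ω}) n :=
      h1.eventually_const_lt (ENNReal.ofReal_lt_one.2 hε1)
    obtain ⟨n, hn⟩ := h3.exists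
    refine ⟨-(n:ℝ), fun t ht => ?_⟩
    by_contra hlt
    push_neg at hlt
    have hsub : {ω | (-(n:ℝ)) < τ i0 ω} ⊆ {ω | t < τ i0 ω} :=
      fun ω hω => lt_trans hlt hω
    have h4 : ENNReal.ofReal ε < μ {ω | t < τ i0 ω} := lt_of_lt_of_le hn (measure_mono hsub)
    rw [hμofReal i0 t] at h4
    have : ε < L t := by
      have := (ENNReal.ofReal_lt_ofReal_iff_of_nonneg hε0.le).1 h4
      exact this
    exact absurd ht (not_le.2 this)
  set t0 : ℝ := sInf S with ht0
  -- beyond t0, L is ≤ ε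
  have hLle : ∀ (i : Fin M) (s : ℝ), t0 < s → μ {ω | s < τ i ω} ≤ ENNReal.ofReal ε := by
    intro i s hs
    obtain ⟨t, htS, hts⟩ := exists_lt_of_csInf_lt hSne hs
    have hsub : {ω | s < τ i ω} ⊆ {ω | t < τ i ω} := fun ω hω => lt_trans hts hω
    refine (measure_mono hsub).trans ?_
    rw [hμofReal i t]
    exact ENNReal.ofReal_le_ofReal htS
  -- the events A i have measure ≤ ε
  have hA : ∀ i, μ {ω | t0 ≤ τ i ω} ≤ ENNReal.ofReal ε := by
    intro i
    have hsplit : {ω | t0 ≤ τ i ω} ⊆ {ω | t0 < τ i ω} ∪ {ω | τ i ω = t0} := by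
      intro ω hω
      simp only [Set.mem_setOf_eq] at hω
      rcases lt_or_eq_of_le hω with h | h
      · exact Or.inl h
      · exact Or.inr h.symm
    have h1 : μ {ω | t0 ≤ τ i ω} ≤ μ {ω | t0 < τ i ω} := by
      calc μ {ω | t0 ≤ τ i ω} ≤ μ ({ω | t0 < τ i ω} ∪ {ω | τ i ω = t0}) := measure_mono hsplit
      _ ≤ μ {ω | t0 < τ i ω} + μ {ω | τ i ω = t0} := measure_union_le _ _
      _ = μ {ω | t0 < τ i ω} := by rw [hcont i t0, add_zero]
    refine h1.trans ?_
    have hmono : Monotone (fun n : ℕ => {ω | t0 + 1/(n+1 : ℝ) < τ i ω}) := by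
      intro n m hnm ω hω
      simp only [Set.mem_setOf_eq] at hω ⊢
      have h1m : (1 : ℝ)/(m+1) ≤ 1/(n+1) := by
        apply one_div_le_one_div_of_le
        · positivity
        · have : (n:ℝ) ≤ m := Nat.cast_le.2 hnm
          linarith
      linarith
    have hU : {ω | t0 < τ i ω} = ⋃ n : ℕ, {ω | t0 + 1/(n+1 : ℝ) < τ i ω} := by
      ext ω
      simp only [Set.mem_iUnion, Set.mem_setOf_eq]
      constructor
      · intro h
        obtain ⟨n, hn⟩ := exists_nat_one_div_lt (sub_pos.2 h)
        exact ⟨n, by push_cast at hn ⊢; linarith⟩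
      · rintro ⟨n, hn⟩
        have : (0:ℝ) < 1/(n+1) := by positivity
        linarith
    rw [hU]
    have h2 := tendsto_measure_iUnion_atTop (μ := μ)
      (s := fun n : ℕ => {ω | t0 + 1/(n+1 : ℝ) < τ i ω}) hmono
    refine le_of_tendsto' h2 fun n => ?_
    apply hLle
    have : (0:ℝ) < 1/(n+1) := by positivity
    linarith
  set q : Fin M → ℝ := fun i => (μ {ω | t0 ≤ τ i ω}).toReal with hqdef
  have hq : ∀ i, 0 ≤ q i ∧ q i ≤ ε :=
    fun i => ⟨ENNReal.toReal_nonneg, ENNReal.toReal_le_of_le_ofReal hε0.le (hA i)⟩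
  have hAq : ∀ i, μ {ω | t0 ≤ τ i ω} = ENNReal.ofReal (q i) :=
    fun i => (ENNReal.ofReal_toReal (measure_ne_top μ _)).symm
  -- inclusion into the counting event
  have hsub : {ω | L (orderStat (fun i => τ i ω) (M - k)) ≤ ε}
      ⊆ {ω | k ≤ (Finset.univ.filter fun i => t0 ≤ τ i ω).card} := by
    intro ω hω
    have hmem : orderStat (fun i => τ i ω) (M - k) ∈ S := hω
    have hge : t0 ≤ orderStat (fun i => τ i ω) (M - k) := csInf_le hSbdd hmem
    have := orderStat_count (fun i => τ i ω) k hkM' t0 hge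
    simpa using le_trans (Nat.le_succ k) this
  -- the pattern events
  have hET : ∀ T : Finset (Fin M),
      μ {ω | ∀ i, (t0 ≤ τ i ω ↔ i ∈ T)}
        = ENNReal.ofReal ((∏ i ∈ T, q i) * ∏ i ∈ Finset.univ \ T, (1 - q i)) := by
    intro T
    have hEq : {ω | ∀ i, (t0 ≤ τ i ω ↔ i ∈ T)}
        = ⋂ i, τ i ⁻¹' (if i ∈ T then Set.Ici t0 else Set.Iio t0) := by
      ext ω
      simp only [Set.mem_iInter, Set.mem_setOf_eq, Set.mem_preimage]
      constructor
      · intro h i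
        by_cases hi : i ∈ T
        · rw [if_pos hi]
          exact (h i).2 hi
        · rw [if_neg hi]
          exact not_le.1 (fun hc => hi ((h i).1 hc))
      · intro h i
        by_cases hi : i ∈ T
        · have := h i
          rw [if_pos hi] at this
          exact ⟨fun _ => hi, fun _ => this⟩
        · have := h i
          rw [if_neg hi] at this
          exact ⟨fun hc => absurd hc (not_le.2 this), fun hc => absurd hc hi⟩
    rw [hEq]
    rw [hindep.meas_iInter (fun i => ⟨if i ∈ T then Set.Ici t0 else Set.Iio t0,
      by split <;> [exact measurableSet_Ici; exact measurableSet_Iio], rfl⟩)]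
    have hterm : ∀ i : Fin M,
        μ (τ i ⁻¹' (if i ∈ T then Set.Ici t0 else Set.Iio t0))
          = if i ∈ T then ENNReal.ofReal (q i) else ENNReal.ofReal (1 - q i) := by
      intro i
      by_cases hi : i ∈ T
      · rw [if_pos hi, if_pos hi, ← hAq i]
        congr 1
      · rw [if_neg hi, if_neg hi]
        have hc : τ i ⁻¹' Set.Iio t0 = {ω | t0 ≤ τ i ω}ᶜ := by
          ext ω
          simp [not_le]
        have hms : MeasurableSet {ω | t0 ≤ τ i ω} := (hmeas i) measurableSet_Ici
        rw [hc, prob_compl_eq_one_sub hms, hAq i,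
          ← ENNReal.ofReal_one, ← ENNReal.ofReal_sub _ (hq i).1]
    rw [Finset.prod_congr rfl (fun i _ => hterm i), ← Finset.prod_sdiff (Finset.subset_univ T)]
    have e1 : (∏ i ∈ Finset.univ \ T,
        if i ∈ T then ENNReal.ofReal (q i) else ENNReal.ofReal (1 - q i))
        = ∏ i ∈ Finset.univ \ T, ENNReal.ofReal (1 - q i) :=
      Finset.prod_congr rfl fun i hi => by rw [if_neg (Finset.mem_sdiff.1 hi).2]
    have e2 : (∏ i ∈ T, if i ∈ T then ENNReal.ofReal (q i) else ENNReal.ofReal (1 - q i))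
        = ∏ i ∈ T, ENNReal.ofReal (q i) :=
      Finset.prod_congr rfl fun i hi => by rw [if_pos hi]
    rw [e1, e2, ← ENNReal.ofReal_prod_of_nonneg (fun i _ => sub_nonneg.2 (le_trans (hq i).2 hε1.le)),
      ← ENNReal.ofReal_prod_of_nonneg (fun i _ => (hq i).1),
      ← ENNReal.ofReal_mul (Finset.prod_nonneg fun i _ => sub_nonneg.2 (le_trans (hq i).2 hε1.le)),
      mul_comm]
  -- covering by pattern events
  have hcover : {ω | k ≤ (Finset.univ.filter fun i => t0 ≤ τ i ω).card}
      ⊆ ⋃ T ∈ Finset.univ.powerset.filter (fun T : Finset (Fin M) => k ≤ T.card),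
          {ω | ∀ i, (t0 ≤ τ i ω ↔ i ∈ T)} := by
    intro ω hω
    simp only [Set.mem_setOf_eq] at hω
    refine Set.mem_biUnion (x := Finset.univ.filter (fun i => t0 ≤ τ i ω)) ?_ ?_
    · exact Finset.mem_filter.2 ⟨Finset.mem_powerset.2 (Finset.subset_univ _), hω⟩
    · intro i
      simp [Finset.mem_filter]
  -- main estimate
  have hmain : μ {ω | k ≤ (Finset.univ.filter fun i => t0 ≤ τ i ω).card}
      ≤ ENNReal.ofReal (patSum q Finset.univ k) := by
    refine (measure_mono hcover).trans ?_
    refine (measure_biUnion_finset_le _ _).trans ?_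
    have e3 : ∀ T ∈ Finset.univ.powerset.filter (fun T : Finset (Fin M) => k ≤ T.card),
        μ {ω | ∀ i, (t0 ≤ τ i ω ↔ i ∈ T)}
          = ENNReal.ofReal ((∏ i ∈ T, q i) * ∏ i ∈ Finset.univ \ T, (1 - q i)) :=
      fun T _ => hET T
    rw [Finset.sum_congr rfl e3,
      ← ENNReal.ofReal_sum_of_nonneg (fun T _ => mul_nonneg
        (Finset.prod_nonneg fun i _ => (hq i).1)
        (Finset.prod_nonneg fun i _ => sub_nonneg.2 (le_trans (hq i).2 hε1.le)))]
    apply ENNReal.ofReal_le_ofReal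
    rw [patSum, Finset.sum_filter]
  -- put everything together
  have hps := patSum_le hε0.le hε1.le q Finset.univ (fun i _ => hq i) k
  rw [Finset.card_univ, Fintype.card_fin] at hps
  have hbin : binCDFZ M ε ((k : ℤ) - 1) = bG ε M k := by
    rw [binCDFZ, if_neg (by omega : ¬ ((k:ℤ) - 1 < 0))]
    have : ((k:ℤ) - 1).toNat + 1 = k := by omega
    rw [this]
    rfl
  rw [hbin]
  calc μ {ω | L (orderStat (fun i => τ i ω) (M - k)) ≤ ε}
      ≤ μ {ω | k ≤ (Finset.univ.filter fun i => t0 ≤ τ i ω).card} := measure_mono hsub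
    _ ≤ ENNReal.ofReal (patSum q Finset.univ k) := hmain
    _ ≤ ENNReal.ofReal (1 - bG ε M k) := ENNReal.ofReal_le_ofReal hps
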